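/- Let h be a harmonic function on SG and let (i,j,k) be a permutation of (1,2,3). Then for every positive integer m, h(P_i^m(q_j)) + h(P_i^m(q_k)) = 2h(q_i) + (3/5)^m·(h(q_j) + h(q_k) − 2h(q_i)), where P_i^m denotes the m-fold iterate of P_i. -/
import Mathlib


open Finset Filter

noncomputable section

/-- Points in the plane. -/
abbrev Pt := Fin 2 → ℝ

/-- The three contraction maps `P_i(x) = (x + q_i)/2`. -/
def Pmap (q : Fin 3 → Pt) (i : Fin 3) (x : Pt) : Pt := (x + q i) / 2

/-- `Pw q m ω = P_{ω 0} ∘ P_{ω 1} ∘ ⋯ ∘ P_{ω (m-1)}` for a word `ω` of length `m`. -/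
def Pw (q : Fin 3 → Pt) : (m : ℕ) → (Fin m → Fin 3) → Pt → Pt
  | 0, _, x => x
  | m + 1, ω, x => Pmap q (ω 0) (Pw q m (fun k => ω k.succ) x)

/-- The level-`m` vertex set `V_m`. -/
def V (q : Fin 3 → Pt) (m : ℕ) : Set Pt :=
  {x | ∃ ω : Fin m → Fin 3, ∃ i : Fin 3, x = Pw q m ω (q i)}

/-- `V_* = ⋃ m, V_m`. -/
def Vstar (q : Fin 3 → Pt) : Set Pt := ⋃ m, V q m

/-- The Sierpinski gasket, as the closure of `V_*`. -/
def SG (q : Fin 3 → Pt) : Set Pt := closure (Vstar q)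

/-- The level-`m` graph energy. -/
def energy (q : Fin 3 → Pt) (m : ℕ) (u : Pt → ℝ) : ℝ :=
  (5/3 : ℝ)^m * ∑ ω : Fin m → Fin 3,
    ∑ p ∈ Finset.univ.filter (fun p : Fin 3 × Fin 3 => p.1 < p.2),
      (u (Pw q m ω (q p.1)) - u (Pw q m ω (q p.2)))^2

/-- The level-`m` bilinear graph energy. -/
def energyBil (q : Fin 3 → Pt) (m : ℕ) (u v : Pt → ℝ) : ℝ :=
  (5/3 : ℝ)^m * ∑ ω : Fin m → Fin 3,
    ∑ p ∈ Finset.univ.filter (fun p : Fin 3 × Fin 3 => p.1 < p.2),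
      (u (Pw q m ω (q p.1)) - u (Pw q m ω (q p.2))) *
        (v (Pw q m ω (q p.1)) - v (Pw q m ω (q p.2)))

open scoped Classical in
/-- The level-`m` graph Laplacian at `x`. -/
def graphLap (q : Fin 3 → Pt) (m : ℕ) (u : Pt → ℝ) (x : Pt) : ℝ :=
  ∑ ω : Fin m → Fin 3,
    ∑ p ∈ Finset.univ.filter (fun p : Fin 3 × Fin 3 => p.1 ≠ p.2 ∧ Pw q m ω (q p.1) = x),
      (u (Pw q m ω (q p.2)) - u x)

/-- A function is harmonic on `SG` if it is continuous on `SG` and satisfies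
the `1/5-2/5` rule. -/
def IsHarmonic (q : Fin 3 → Pt) (h : Pt → ℝ) : Prop :=
  ContinuousOn h (SG q) ∧
  ∀ (m : ℕ) (ω : Fin m → Fin 3) (i j k : Fin 3), i ≠ j → j ≠ k → i ≠ k →
    h (Pw q m ω (Pmap q i (q j))) =
      2/5 * h (Pw q m ω (q i)) + 2/5 * h (Pw q m ω (q j)) + 1/5 * h (Pw q m ω (q k))

/-- `f` is a fractal interpolation function on `SG` with vertical scaling factors `d i`. -/
def IsFIF (q : Fin 3 → Pt) (d : Fin 3 → ℝ) (f : Pt → ℝ) : Prop :=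
  ContinuousOn f (SG q) ∧
  ∃ h : Fin 3 → Pt → ℝ, (∀ i, IsHarmonic q (h i)) ∧
    ∀ i, ∀ x ∈ SG q, f (Pmap q i x) = d i * f x + h i x


lemma Pmap_fixed (q : Fin 3 → Pt) (i : Fin 3) : Pmap q i (q i) = q i := by
  funext t; simp [Pmap]

lemma Pw_const (q : Fin 3 → Pt) (i : Fin 3) (x : Pt) :
    ∀ m : ℕ, Pw q m (fun _ => i) x = (Pmap q i)^[m] x := by
  intro m
  induction m with
  | zero => rfl
  | succ n ih =>
    show Pmap q i (Pw q n (fun _ => i) x) = _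
    rw [ih, Function.iterate_succ_apply']

/-- for a harmonic function `h` on SG and a permutation `(i,j,k)`,
`h(P_i^m(q_j)) + h(P_i^m(q_k)) = 2h(q_i) + (3/5)^m (h(q_j)+h(q_k)-2h(q_i))`. -/
theorem stmt_6 (q : Fin 3 → Pt) (hq : AffineIndependent ℝ q)
    (h : Pt → ℝ) (hh : IsHarmonic q h)
    (i j k : Fin 3) (hij : i ≠ j) (hjk : j ≠ k) (hik : i ≠ k) :
    ∀ m : ℕ, 1 ≤ m →
      h ((Pmap q i)^[m] (q j)) + h ((Pmap q i)^[m] (q k)) =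
        2 * h (q i) + (3/5 : ℝ)^m * (h (q j) + h (q k) - 2 * h (q i)) := by
  have key : ∀ m : ℕ,
      h ((Pmap q i)^[m] (q j)) + h ((Pmap q i)^[m] (q k)) =
        2 * h (q i) + (3/5 : ℝ)^m * (h (q j) + h (q k) - 2 * h (q i)) := by
    intro m
    induction m with
    | zero => simp
    | succ n ih =>
      have e1 := hh.2 n (fun _ => i) i j k hij hjk hik
      have e2 := hh.2 n (fun _ => i) i k j hik hjk.symm hij
      simp only [Pw_const] at e1 e2
      have hfix : (Pmap q i)^[n] (q i) = q i :=
        Function.iterate_fixed (Pmap_fixed q i) n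
      rw [hfix] at e1 e2
      have hj' : (Pmap q i)^[n] (Pmap q i (q j)) = (Pmap q i)^[n+1] (q j) :=
        (Function.iterate_succ_apply (Pmap q i) n (q j)).symm
      have hk' : (Pmap q i)^[n] (Pmap q i (q k)) = (Pmap q i)^[n+1] (q k) :=
        (Function.iterate_succ_apply (Pmap q i) n (q k)).symm
      rw [hj'] at e1; rw [hk'] at e2
      rw [e1, e2, pow_succ]
      linarith [ih]
  intro m _; exact key m

end
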